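/- Credit assignment correctness: in the credit protocol, when a signal s is emitted with a nonempty signal queue whose tail signal is s', the credit assigned to s (the number of data items emitted since s') equals the number of data items that the receiver must consume strictly between consuming s' and consuming s, in every execution in which both signals are consumed. -/

import Mathlib

/-- Events: data items, or signals recording the credit they were assigned and
whether they were emitted onto a nonempty signal queue (protocol rule 2). -/
inductive Ev
  | data (v : ℕ)
  | sig (id credit : ℕ) (nonemptyS : Bool)
deriving DecidableEq

/-- Channel state of the credit protocol with explicit FIFO queues and
emission/consumption logs. `S` pairs each queued signal event with its
remaining credit. -/
structure CState where
  emitted : List Ev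
  consumed : List Ev
  Q : List ℕ
  S : List (Ev × ℕ)
  c : ℕ
  k : ℕ

/-- Transitions of the credit protocol.  A signal emitted onto an empty signal
queue gets credit equal to the current data-queue length; a signal emitted
onto a nonempty signal queue gets credit equal to the number of data items
emitted since the previous signal. -/
inductive CStep : CState → CState → Prop
  | emitData (s : CState) (v : ℕ) :
      CStep s { s with emitted := s.emitted ++ [.data v],
                       Q := s.Q ++ [v], k := s.k + 1 }
  | emitSignal (s : CState) (i : ℕ) :
      CStep s { s with
        emitted := s.emitted ++
          [.sig i (if s.S = [] then s.Q.length else s.k) (!s.S.isEmpty)],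
        S := s.S ++
          [(.sig i (if s.S = [] then s.Q.length else s.k) (!s.S.isEmpty),
            if s.S = [] then s.Q.length else s.k)],
        k := 0 }
  | consumeData (s : CState) (v : ℕ) (Q' : List ℕ)
      (hQ : s.Q = v :: Q') (h : s.S = [] ∨ 0 < s.c) :
      CStep s { s with consumed := s.consumed ++ [.data v], Q := Q',
                       c := if s.S = [] then s.c else s.c - 1 }
  | transfer (s : CState) (e : Ev) (h : ℕ) (S' : List (Ev × ℕ))
      (hS : s.S = (e, h) :: S') (hc : s.c = 0) (hh : 0 < h) :
      CStep s { s with S := (e, 0) :: S', c := h }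
  | consumeSignal (s : CState) (e : Ev) (S' : List (Ev × ℕ))
      (hS : s.S = (e, 0) :: S') (hc : s.c = 0) :
      CStep s { s with consumed := s.consumed ++ [e], S := S' }

/-- Initial state. -/
def initC : CState := ⟨[], [], [], [], 0, 0⟩

namespace CreditProof

/-- All events in a list are data. -/
def AllData (m : List Ev) : Prop := ∀ e ∈ m, ∃ v, e = Ev.data v

/-- The key property of the emission log: every signal emitted with flag
`true` carries a credit equal to the number of data items separating it from
the previous signal. -/
def GoodLog (l : List Ev) : Prop :=
  ∀ (p m q : List Ev) (a ca b cb : ℕ) (fa : Bool),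
    l = p ++ Ev.sig a ca fa :: (m ++ Ev.sig b cb true :: q) →
    AllData m → cb = m.length

/-- `Seg c S Q k r` : the events still in transit form the list `r`, which is
the merge of the data queue `Q` with the signal queue `S`, where the first
signal is preceded by `c + (its remaining credit)` data items, every other
signal by (its credit) data items, and the final signal is followed by `k`
data items. -/
inductive Seg : ℕ → List (Ev × ℕ) → List ℕ → ℕ → List Ev → Prop
  | nil (qn : List ℕ) : Seg 0 [] qn qn.length (qn.map .data)
  | cons (c : ℕ) (e : Ev) (h : ℕ) (S' : List (Ev × ℕ)) (q0 Q' : List ℕ)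
      (k : ℕ) (r : List Ev) (hq : q0.length = c + h) (hs : Seg 0 S' Q' k r) :
      Seg c ((e, h) :: S') (q0 ++ Q') k (q0.map .data ++ e :: r)

/-- The global invariant. -/
def Inv (s : CState) : Prop :=
  GoodLog s.emitted ∧
  (∀ x ∈ s.S, ∃ i cr f, x.1 = Ev.sig i cr f) ∧
  (s.S = [] → s.c = 0 ∧ s.emitted = s.consumed ++ s.Q.map .data) ∧
  (s.S ≠ [] → ∃ r, Seg s.c s.S s.Q s.k r ∧ s.emitted = s.consumed ++ r)

lemma Seg_nil_inv {c : ℕ} {Q : List ℕ} {k : ℕ} {r : List Ev}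
    (h : Seg c [] Q k r) : c = 0 ∧ k = Q.length ∧ r = Q.map .data := by
  cases h; exact ⟨rfl, rfl, rfl⟩

lemma Seg_cons_inv {c : ℕ} {e : Ev} {hh : ℕ} {S' : List (Ev × ℕ)}
    {Q : List ℕ} {k : ℕ} {r : List Ev} (h : Seg c ((e, hh) :: S') Q k r) :
    ∃ q0 Q2 r2, Q = q0 ++ Q2 ∧ r = q0.map .data ++ e :: r2 ∧
      q0.length = c + hh ∧ Seg 0 S' Q2 k r2 := by
  cases h with
  | cons _ _ _ _ q0 Q2 _ r2 hq hs => exact ⟨q0, Q2, r2, rfl, rfl, hq, hs⟩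

lemma Seg_emitData {c : ℕ} {S : List (Ev × ℕ)} {Q : List ℕ} {k : ℕ}
    {r : List Ev} (h : Seg c S Q k r) (v : ℕ) :
    Seg c S (Q ++ [v]) (k + 1) (r ++ [.data v]) := by
  induction h with
  | nil qn =>
      have := Seg.nil (qn ++ [v])
      simpa using this
  | cons c e hh S' q0 Q' k r hq hs ih =>
      have := Seg.cons c e hh S' q0 (Q' ++ [v]) (k + 1) (r ++ [.data v]) hq ih
      simpa using this

lemma Seg_emitSignal {c : ℕ} {S : List (Ev × ℕ)} {Q : List ℕ} {k : ℕ}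
    {r : List Ev} (h : Seg c S Q k r) (e : Ev) :
    Seg c (S ++ [(e, k)]) Q 0 (r ++ [e]) := by
  induction h with
  | nil qn =>
      have := Seg.cons 0 e qn.length [] qn [] 0 ([].map Ev.data)
        (by simp) (Seg.nil [])
      simpa using this
  | cons c e' hh S' q0 Q' k r hq hs ih =>
      have := Seg.cons c e' hh (S' ++ [(e, k)]) q0 Q' 0 (r ++ [e]) hq ih
      simpa using this

lemma Seg_consumeData {c : ℕ} {e : Ev} {hh : ℕ} {S' : List (Ev × ℕ)}
    {v : ℕ} {Q' : List ℕ} {k : ℕ} {r : List Ev}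
    (h : Seg c ((e, hh) :: S') (v :: Q') k r) (hc : 0 < c) :
    ∃ r', r = .data v :: r' ∧ Seg (c - 1) ((e, hh) :: S') Q' k r' := by
  obtain ⟨q0, Q2, r2, hQ, hr, hq, hs⟩ := Seg_cons_inv h
  match q0, hq with
  | [], hq => simp at hq; omega
  | w :: q0', hq =>
      have hw : w = v := by simpa using congrArg (fun l => l.headI) hQ.symm
      subst hw
      have hQ' : Q' = q0' ++ Q2 := by simpa using hQ
      refine ⟨q0'.map .data ++ e :: r2, by simpa using hr, ?_⟩
      rw [hQ']
      exact Seg.cons _ e hh S' q0' Q2 k r2 (by simp at hq ⊢; omega) hs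

lemma Seg_transfer {e : Ev} {hh : ℕ} {S' : List (Ev × ℕ)} {Q : List ℕ}
    {k : ℕ} {r : List Ev} (h : Seg 0 ((e, hh) :: S') Q k r) :
    Seg hh ((e, 0) :: S') Q k r := by
  obtain ⟨q0, Q2, r2, hQ, hr, hq, hs⟩ := Seg_cons_inv h
  subst hQ; subst hr
  exact Seg.cons _ e 0 S' q0 Q2 k r2 (by omega) hs

lemma Seg_consumeSignal {e : Ev} {S' : List (Ev × ℕ)} {Q : List ℕ}
    {k : ℕ} {r : List Ev} (h : Seg 0 ((e, 0) :: S') Q k r) :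
    ∃ r', r = e :: r' ∧ Seg 0 S' Q k r' := by
  obtain ⟨q0, Q2, r2, hQ, hr, hq, hs⟩ := Seg_cons_inv h
  have h0 : q0 = [] := List.length_eq_zero_iff.mp (by omega)
  subst h0
  simp only [List.nil_append] at hQ hr
  exact ⟨r2, by simpa using hr, hQ ▸ hs⟩

lemma Seg_split {c : ℕ} {S : List (Ev × ℕ)} {Q : List ℕ} {k : ℕ}
    {r : List Ev} (h : Seg c S Q k r) (hne : S ≠ []) :
    ∃ (r0 : List Ev) (e : Ev) (qn : List ℕ),
      r = r0 ++ e :: qn.map Ev.data ∧ qn.length = k ∧ ∃ h', (e, h') ∈ S := by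
  induction h with
  | nil qn => exact absurd rfl hne
  | cons c e hh S' q0 Q' k r hq hs ih =>
      by_cases hS' : S' = []
      · subst hS'
        obtain ⟨-, hk, hr⟩ := Seg_nil_inv hs
        subst hr
        exact ⟨q0.map Ev.data, e, Q', rfl, hk.symm, hh, by simp⟩
      · obtain ⟨r0, e', qn, hr, hk, h', hmem⟩ := ih hS'
        exact ⟨q0.map Ev.data ++ e :: r0, e', qn, by simp [hr], hk,
          h', by simp [hmem]⟩

lemma suffix_total {α : Type*} {s t u : List α} (h1 : s <:+ u) (h2 : t <:+ u)
    (hl : s.length ≤ t.length) : s <:+ t := by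
  obtain ⟨a, rfl⟩ := h1
  obtain ⟨b, hb⟩ := h2
  have hlen : b.length ≤ a.length := by
    have := congrArg List.length hb
    simp at this; omega
  have ha : a = a.take b.length ++ a.drop b.length := (List.take_append_drop _ _).symm
  have heq : a.take b.length ++ (a.drop b.length ++ s) = b ++ t := by
    rw [← List.append_assoc, ← ha]; exact hb.symm
  have := List.append_inj_right heq (by simp [hlen])
  exact ⟨a.drop b.length, this⟩

/-- Uniqueness of the "last signal" decomposition (the data tails agree). -/
lemma lastSig_eq {l1 l2 m1 m2 : List Ev} {x1 x2 : Ev}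
    (heq : l1 ++ x1 :: m1 = l2 ++ x2 :: m2)
    (h1 : AllData m1) (h2 : AllData m2)
    (hx1 : ∀ v, x1 ≠ Ev.data v) (hx2 : ∀ v, x2 ≠ Ev.data v) : m1 = m2 := by
  have s1 : (x1 :: m1) <:+ (l2 ++ x2 :: m2) := ⟨l1, heq⟩
  have s2 : (x2 :: m2) <:+ (l2 ++ x2 :: m2) := ⟨l2, rfl⟩
  rcases le_total (x1 :: m1).length (x2 :: m2).length with hl | hl
  · obtain ⟨t, ht⟩ := suffix_total s1 s2 hl
    match t, ht with
    | [], ht =>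
        have h' : x1 = x2 ∧ m1 = m2 := by simpa using ht
        exact h'.2
    | w :: t', ht =>
        have hm : x1 ∈ m2 := by
          have h' : w = x2 ∧ t' ++ x1 :: m1 = m2 := by simpa using ht
          rw [← h'.2]; simp
        obtain ⟨v, hv⟩ := h2 _ hm
        exact absurd hv (hx1 v)
  · obtain ⟨t, ht⟩ := suffix_total s2 s1 hl
    match t, ht with
    | [], ht =>
        have h' : x2 = x1 ∧ m2 = m1 := by simpa using ht
        exact h'.2.symm
    | w :: t', ht =>
        have hm : x2 ∈ m1 := by
          have h' : w = x1 ∧ t' ++ x2 :: m2 = m1 := by simpa using ht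
          rw [← h'.2]; simp
        obtain ⟨v, hv⟩ := h1 _ hm
        exact absurd hv (hx2 v)

/-- Appending one event preserves `GoodLog`, provided that if the appended
event is a `true`-flagged signal, its credit matches every last-signal
decomposition of the log. -/
lemma GoodLog_append {l : List Ev} {x : Ev} (hP : GoodLog l)
    (hx : ∀ b cb, x = Ev.sig b cb true →
      ∀ (p m : List Ev) (a ca : ℕ) (fa : Bool),
        l = p ++ Ev.sig a ca fa :: m → AllData m → cb = m.length) :
    GoodLog (l ++ [x]) := by
  intro p m q a ca b cb fa heq hm
  rcases q.eq_nil_or_concat with rfl | ⟨q', y, rfl⟩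
  · have heq' : l ++ [x] = (p ++ Ev.sig a ca fa :: m) ++ [Ev.sig b cb true] := by
      simpa [List.append_assoc] using heq
    obtain ⟨h1, h2⟩ := List.append_inj' heq' rfl
    exact hx b cb (by simpa using h2) p m a ca fa h1 hm
  · have heq' : l ++ [x] =
        (p ++ Ev.sig a ca fa :: (m ++ Ev.sig b cb true :: q')) ++ [y] := by
      simpa [List.append_assoc, List.concat_eq_append] using heq
    obtain ⟨h1, h2⟩ := List.append_inj' heq' rfl
    exact hP p m q' a ca b cb fa h1 hm

lemma Inv_init : Inv initC := by
  refine ⟨?_, by simp [initC], by simp [initC], by simp [initC]⟩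
  intro p m q a ca b cb fa heq
  exact absurd (congrArg List.length heq) (by simp [initC])

lemma Inv_step {s s' : CState} (hinv : Inv s) (h : CStep s s') : Inv s' := by
  obtain ⟨hP, hsigs, hemp, hne⟩ := hinv
  cases h with
  | emitData v =>
      refine ⟨GoodLog_append hP (by intro b cb hbx; cases hbx), hsigs, ?_, ?_⟩
      · intro hS
        obtain ⟨hc, he⟩ := hemp hS
        exact ⟨hc, by simp [he]⟩
      · intro hS
        obtain ⟨r, hseg, he⟩ := hne hS
        exact ⟨r ++ [.data v], Seg_emitData hseg v, by simp [he]⟩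
  | emitSignal i =>
      by_cases hS : s.S = []
      · obtain ⟨hc, he⟩ := hemp hS
        refine ⟨GoodLog_append hP ?_, ?_, by simp, ?_⟩
        · intro b cb hbx
          rw [hS] at hbx
          simp at hbx
        · intro x hx
          simp at hx
          rcases hx with hx | hx
          · exact hsigs x hx
          · exact ⟨i, _, _, by rw [hx]⟩
        · intro _
          refine ⟨s.Q.map .data ++
            [.sig i (if s.S = [] then s.Q.length else s.k) (!s.S.isEmpty)],
            ?_, by simp [he, hc]⟩
          simp only [hS]
          simpa [hc] using Seg_emitSignal (Seg.nil s.Q)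
            (Ev.sig i s.Q.length false)
      · obtain ⟨r, hseg, he⟩ := hne hS
        have hflag : (!s.S.isEmpty) = true := by
          simp [List.isEmpty_iff, hS]
        refine ⟨GoodLog_append hP ?_, ?_, by simp, ?_⟩
        · intro b cb hbx
          rw [if_neg hS, hflag] at hbx
          obtain ⟨rfl, rfl⟩ : b = i ∧ cb = s.k := by
            cases hbx; exact ⟨rfl, rfl⟩
          intro p m a ca fa hl hm
          obtain ⟨r0, e, qn, hr, hk, h', hmem⟩ := Seg_split hseg hS
          obtain ⟨i', cr', f', hes⟩ := hsigs _ hmem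
          have hl2 : (s.consumed ++ r0) ++ e :: qn.map Ev.data =
              p ++ Ev.sig a ca fa :: m := by
            rw [List.append_assoc, ← hr, ← he, hl]
          have hmeq : qn.map Ev.data = m :=
            lastSig_eq hl2 (by intro x hx; simpa using
              (by obtain ⟨v, -, hv⟩ := List.mem_map.mp hx; exact ⟨v, hv.symm⟩ :
                ∃ v, x = Ev.data v)) hm
              (by intro v hv;
                  rw [show e = Ev.sig i' cr' f' from hes] at hv; cases hv)
              (by intro v hv; cases hv)
          rw [← hmeq]; simpa using hk.symm
        · intro x hx
          simp at hx
          rcases hx with hx | hx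
          · exact hsigs x hx
          · exact ⟨i, _, _, by rw [hx]⟩
        · intro _
          refine ⟨r ++
            [.sig i (if s.S = [] then s.Q.length else s.k) (!s.S.isEmpty)],
            ?_, by simp [he]⟩
          rw [if_neg hS, hflag]
          exact Seg_emitSignal hseg (Ev.sig i s.k true)
  | consumeData v Q' hQ hcd =>
      by_cases hS : s.S = []
      · obtain ⟨hc, he⟩ := hemp hS
        refine ⟨hP, hsigs, ?_, by intro h'; exact absurd hS h'⟩
        intro _
        refine ⟨by simp [hS, hc], ?_⟩
        simp only [hS, if_pos rfl] at *
        rw [he, hQ]; simp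
      · have hc : 0 < s.c := by
          rcases hcd with h' | h'
          · exact absurd h' hS
          · exact h'
        obtain ⟨r, hseg, he⟩ := hne hS
        match hSm : s.S, hseg with
        | [], _ => exact absurd hSm hS
        | (e, hh) :: S', hseg =>
          rw [hQ] at hseg
          obtain ⟨r', hr, hseg'⟩ := Seg_consumeData hseg hc
          refine ⟨hP, by rw [hSm] at hsigs; exact hsigs, by simp, ?_⟩
          intro _
          refine ⟨r', by simpa [hSm] using hseg', ?_⟩
          simp only [if_neg (by rw [hSm]; simp : ¬ s.S = [])] at *
          rw [he, hr]; simp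
  | transfer e hh S' hS hc hhpos =>
      obtain ⟨r, hseg, he⟩ := hne (by rw [hS]; simp)
      rw [hS, hc] at hseg
      refine ⟨hP, ?_, by simp, ?_⟩
      · intro x hx
        simp at hx
        rcases hx with hx | hx
        · subst hx
          exact hsigs (e, hh) (by rw [hS]; simp)
        · exact hsigs x (by rw [hS]; simp [hx])
      · intro _
        exact ⟨r, Seg_transfer hseg, he⟩
  | consumeSignal e S' hS hc =>
      obtain ⟨r, hseg, he⟩ := hne (by rw [hS]; simp)
      rw [hS, hc] at hseg
      obtain ⟨r', hr, hseg'⟩ := Seg_consumeSignal hseg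
      refine ⟨hP, ?_, ?_, ?_⟩
      · intro x hx
        exact hsigs x (by rw [hS]; simp [hx])
      · intro hS'
        subst hS'
        obtain ⟨-, hk, hr'⟩ := Seg_nil_inv hseg'
        refine ⟨hc, ?_⟩
        simp only []
        rw [he, hr, hr']; simp
      · intro hS'
        refine ⟨r', by simpa [hc] using hseg', ?_⟩
        simp only []
        rw [he, hr]; simp

lemma Inv_reach {s : CState} (h : Relation.ReflTransGen CStep initC s) :
    Inv s := by
  induction h with
  | refl => exact Inv_init
  | tail _ hstep ih => exact Inv_step ih hstep

end CreditProof

/-- credit assignment correctness: if, in a reachable state, the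
receiver has consumed two signals `s'` (id `a`) and `s` (id `b`) with only
data items `m` consumed strictly between them, and `s` was emitted while the
signal queue was nonempty (so its credit was the number of data items emitted
since `s'`), then the credit `cb` carried by `s` equals the number of data
items consumed strictly between `s'` and `s` (which, by precise delivery,
equals the number of data items emitted between them). -/
theorem credit_assignment_correct (s : CState)
    (hreach : Relation.ReflTransGen CStep initC s)
    (p m q : List Ev) (a ca b cb : ℕ) (fa : Bool)
    (hcons : s.consumed = p ++ [.sig a ca fa] ++ m ++ [.sig b cb true] ++ q)
    (hm : ∀ ev ∈ m, ∃ v, ev = Ev.data v) :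
    cb = m.length := by
  obtain ⟨hP, -, hemp, hne⟩ := CreditProof.Inv_reach hreach
  obtain ⟨r, he⟩ : ∃ r, s.emitted = s.consumed ++ r := by
    by_cases hS : s.S = []
    · exact ⟨s.Q.map .data, (hemp hS).2⟩
    · obtain ⟨r, -, he⟩ := hne hS
      exact ⟨r, he⟩
  refine hP p m (q ++ r) a ca b cb fa ?_ hm
  rw [he, hcons]
  simp [List.append_assoc]
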